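/- arXiv:2206.12810 — 12 statements merged into one kernel-verified Lean document; each statement's English description precedes it below -/
import Mathlib

section
/- In any perm algebra A with derivation d, the operation a ≻ b := d(a)·b satisfies ⟨x₁, x₂ ≻ x₃, x₄⟩ = ⟨x₁, x₃, x₂ ≻ x₄⟩, where ⟨a,b,c⟩ = (a ≻ b) ≻ c − a ≻ (b ≻ c) is the associator of ≻. -/
/-- `a ≻ b := d a * b` in a perm algebra with derivation. -/
def succOp {A : Type*} [NonUnitalRing A] (d : A → A) (a b : A) : A := d a * b

/-- The associator of `≻`. -/
def succAssoc {A : Type*} [NonUnitalRing A] (d : A → A) (a b c : A) : A :=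
  succOp d (succOp d a b) c - succOp d a (succOp d b c)

/-- In any perm algebra with derivation `d`, the operation `a ≻ b := d a * b`
satisfies `⟨x₁, x₂ ≻ x₃, x₄⟩ = ⟨x₁, x₃, x₂ ≻ x₄⟩`. -/
theorem perm_der_succ_assoc_identity {A : Type*} [NonUnitalRing A]
    (perm : ∀ a b c : A, a * b * c = b * a * c)
    (d : A → A) (hadd : ∀ a b : A, d (a + b) = d a + d b)
    (hleib : ∀ a b : A, d (a * b) = d a * b + a * d b)
    (x₁ x₂ x₃ x₄ : A) :
    succAssoc d x₁ (succOp d x₂ x₃) x₄ = succAssoc d x₁ x₃ (succOp d x₂ x₄) := by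
  have perm' : ∀ a b c : A, a * (b * c) = b * (a * c) := by
    intro a b c; rw [← mul_assoc, ← mul_assoc, perm]
  simp only [succAssoc, succOp, hleib, hadd, mul_add, add_mul, mul_assoc]
  rw [perm' (d x₂) x₃ x₄]
  abel
end

section
/- In any perm algebra A with derivation d, the operation a ≻ b := d(a)·b satisfies ⟨x₁, x₂, x₃⟩ ≻ x₄ = ⟨x₁, x₃, x₂⟩ ≻ x₄, where ⟨a,b,c⟩ = (a ≻ b) ≻ c − a ≻ (b ≻ c). -/
lemma succAssoc_eq {A : Type*} [NonUnitalRing A] (d : A → A)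
    (hleib : ∀ a b : A, d (a * b) = d a * b + a * d b) (a b c : A) :
    succAssoc d a b c = d (d a) * b * c := by
  simp only [succAssoc, succOp, hleib, add_mul, mul_assoc]
  abel

/-- In any perm algebra with derivation `d`, the operation `a ≻ b := d a * b`
satisfies `⟨x₁,x₂,x₃⟩ ≻ x₄ = ⟨x₁,x₃,x₂⟩ ≻ x₄`. -/
theorem perm_der_succ_assoc_right_identity {A : Type*} [NonUnitalRing A]
    (perm : ∀ a b c : A, a * b * c = b * a * c)
    (d : A → A) (hadd : ∀ a b : A, d (a + b) = d a + d b)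
    (hleib : ∀ a b : A, d (a * b) = d a * b + a * d b)
    (x₁ x₂ x₃ x₄ : A) :
    succOp d (succAssoc d x₁ x₂ x₃) x₄ = succOp d (succAssoc d x₁ x₃ x₂) x₄ := by
  have swap23 : ∀ p q r s : A, p * q * r * s = p * r * q * s := by
    intro p q r s
    rw [perm (p * q) r s, ← mul_assoc r p q, perm r p q]
  rw [succAssoc_eq d hleib, succAssoc_eq d hleib]
  simp only [succOp, hleib, add_mul]
  rw [swap23 (d (d (d x₁))) x₂ x₃ x₄, swap23 (d (d x₁)) (d x₂) x₃ x₄,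
    swap23 (d (d x₁)) x₂ (d x₃) x₄]
  abel
end

section
/- In any perm algebra A with derivation d, the operation a ≺ b := a·d(b) satisfies the right-commutativity identity ((x₁ ≺ x₂) ≺ x₃) ≺ x₄ = ((x₁ ≺ x₃) ≺ x₂) ≺ x₄. -/
/-- `a ≺ b := a * d b` in a perm algebra with derivation. -/
def precOp {A : Type*} [NonUnitalRing A] (d : A → A) (a b : A) : A := a * d b

/-- In any perm algebra with derivation `d`, the operation `a ≺ b := a * d b`
satisfies `((x₁ ≺ x₂) ≺ x₃) ≺ x₄ = ((x₁ ≺ x₃) ≺ x₂) ≺ x₄`. -/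
theorem perm_der_prec_right_comm {A : Type*} [NonUnitalRing A]
    (perm : ∀ a b c : A, a * b * c = b * a * c)
    (d : A → A) (hadd : ∀ a b : A, d (a + b) = d a + d b)
    (hleib : ∀ a b : A, d (a * b) = d a * b + a * d b)
    (x₁ x₂ x₃ x₄ : A) :
    precOp d (precOp d (precOp d x₁ x₂) x₃) x₄ =
      precOp d (precOp d (precOp d x₁ x₃) x₂) x₄ := by
  simp only [precOp]
  rw [perm (x₁ * d x₂) (d x₃), ← mul_assoc, perm (d x₃) x₁]
end

section
/- In any perm algebra A with derivation d, the operation a ≺ b := a·d(b) is left-symmetric (pre-Lie): (x₁ ≺ x₂) ≺ x₃ − x₁ ≺ (x₂ ≺ x₃) = (x₂ ≺ x₁) ≺ x₃ − x₂ ≺ (x₁ ≺ x₃). -/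
/-- In any perm algebra with derivation `d`, the operation `a ≺ b := a * d b`
is left-symmetric (pre-Lie). -/
theorem perm_der_prec_left_symmetric {A : Type*} [NonUnitalRing A]
    (perm : ∀ a b c : A, a * b * c = b * a * c)
    (d : A → A) (hadd : ∀ a b : A, d (a + b) = d a + d b)
    (hleib : ∀ a b : A, d (a * b) = d a * b + a * d b)
    (x₁ x₂ x₃ : A) :
    precOp d (precOp d x₁ x₂) x₃ - precOp d x₁ (precOp d x₂ x₃) =
      precOp d (precOp d x₂ x₁) x₃ - precOp d x₂ (precOp d x₁ x₃) := by
  unfold precOp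
  rw [hleib, hleib]
  simp only [mul_add, ← mul_assoc]
  rw [perm x₁ x₂ (d (d x₃))]
  abel_nf
end

section
/- In any perm algebra A with derivation d, the two operations x ⊢ y := x·d(y) and x ⊣ y := d(y)·x satisfy the 0-identities of dialgebras: (x₁ ⊣ x₂) ⊢ x₃ = (x₁ ⊢ x₂) ⊢ x₃ and x₁ ⊣ (x₂ ⊢ x₃) = x₁ ⊣ (x₂ ⊣ x₃). -/
/-- `x ⊢ y := x * d y`. -/
def vdashOp {A : Type*} [NonUnitalRing A] (d : A → A) (x y : A) : A := x * d y

/-- `x ⊣ y := d y * x`. -/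
def dashvOp {A : Type*} [NonUnitalRing A] (d : A → A) (x y : A) : A := d y * x

/-- In any perm algebra with derivation `d`, the operations `⊢` and `⊣`
satisfy the 0-identities of dialgebras. -/
theorem perm_der_zero_identities {A : Type*} [NonUnitalRing A]
    (perm : ∀ a b c : A, a * b * c = b * a * c)
    (d : A → A) (hadd : ∀ a b : A, d (a + b) = d a + d b)
    (hleib : ∀ a b : A, d (a * b) = d a * b + a * d b)
    (x₁ x₂ x₃ : A) :
    vdashOp d (dashvOp d x₁ x₂) x₃ = vdashOp d (vdashOp d x₁ x₂) x₃ ∧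
    dashvOp d x₁ (vdashOp d x₂ x₃) = dashvOp d x₁ (dashvOp d x₂ x₃) := by
  constructor
  · simp only [vdashOp, dashvOp]
    exact perm (d x₂) x₁ (d x₃)
  · simp only [vdashOp, dashvOp, hleib]
    rw [add_mul, add_mul, perm (d x₂) (d x₃) x₁, perm (x₂) (d (d x₃)) x₁, add_comm]
end

section
/- In any perm algebra A with derivation d, the operations x ⊢ y := x·d(y) and x ⊣ y := d(y)·x satisfy the Novikov dialgebra identities: (x₁⊢x₂)⊢x₃ − x₁⊢(x₂⊢x₃) = (x₂⊢x₁)⊢x₃ − x₂⊢(x₁⊢x₃), (x₁⊣x₂)⊣x₃ = (x₁⊣x₃)⊣x₂, (x₁⊣x₂)⊣x₃ − x₁⊣(x₂⊣x₃) = (x₂⊢x₁)⊣x₃ − x₂⊢(x₁⊣x₃), and (x₁⊢x₂)⊣x₃ = (x₁⊢x₃)⊢x₂. -/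
/-- In any perm algebra with derivation `d`, the operations `⊢` and `⊣`
satisfy the Novikov dialgebra identities. -/
theorem perm_der_novikov_dialgebra_identities {A : Type*} [NonUnitalRing A]
    (perm : ∀ a b c : A, a * b * c = b * a * c)
    (d : A → A) (hadd : ∀ a b : A, d (a + b) = d a + d b)
    (hleib : ∀ a b : A, d (a * b) = d a * b + a * d b)
    (x₁ x₂ x₃ : A) :
    (vdashOp d (vdashOp d x₁ x₂) x₃ - vdashOp d x₁ (vdashOp d x₂ x₃) =
      vdashOp d (vdashOp d x₂ x₁) x₃ - vdashOp d x₂ (vdashOp d x₁ x₃)) ∧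
    (dashvOp d (dashvOp d x₁ x₂) x₃ = dashvOp d (dashvOp d x₁ x₃) x₂) ∧
    (dashvOp d (dashvOp d x₁ x₂) x₃ - dashvOp d x₁ (dashvOp d x₂ x₃) =
      dashvOp d (vdashOp d x₂ x₁) x₃ - vdashOp d x₂ (dashvOp d x₁ x₃)) ∧
    (dashvOp d (vdashOp d x₁ x₂) x₃ = vdashOp d (vdashOp d x₁ x₃) x₂) := by
  refine ⟨?_, ?_, ?_, ?_⟩ <;> simp only [vdashOp, dashvOp, hleib, mul_add, add_mul, ← mul_assoc]
  · abel_nf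
    rw [perm x₁ x₂ (d (d x₃))]
  · rw [perm (d x₃) (d x₂) x₁]
  · have h1 : d x₃ * x₂ * d x₁ = x₂ * d x₃ * d x₁ := perm _ _ _
    have h2 : d (d x₃) * x₂ * x₁ = x₂ * d (d x₃) * x₁ := perm _ _ _
    rw [h1, h2]; abel
  · rw [perm x₁ (d x₃) (d x₂)]
end

section
/- In any perm algebra A with derivation d and a ≻ b := d(a)b, the following degree-5 identity holds: (x₁≻x₂)≻((x₃≻x₄)≻x₅) = ((x₁≻x₂)≻(x₃≻x₄))≻x₅ − ((x₁≻x₂)≻x₄)≻(x₃≻x₅) + x₄≻((x₁≻x₂)≻(x₃≻x₅)). -/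
lemma swap23_aux {A : Type*} [NonUnitalRing A]
    (perm : ∀ a b c : A, a * b * c = b * a * c) (a b c e : A) :
    a * b * c * e = a * c * b * e := by
  rw [perm (a*b) c e, ← mul_assoc c a b, perm c a b]

lemma key_aux {A : Type*} [NonUnitalRing A]
    (perm : ∀ a b c : A, a * b * c = b * a * c) (D E q q' r r' s : A) :
    D * ((q' * r + q * r') * s) =
      (E * (q * r) + D * (q' * r + q * r')) * s
      - (E * r + D * r') * (q * s) + r' * (D * (q * s)) := by
  have h1 : E * q * r * s = E * r * q * s := swap23_aux perm E q r s
  have h2 : D * r' * (q * s) = r' * (D * (q * s)) := by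
    rw [← mul_assoc, perm D r' q, mul_assoc, mul_assoc]
  simp only [mul_add, add_mul, ← mul_assoc] at *
  rw [h1, h2]
  abel

/-- In any perm algebra with derivation `d` and `a ≻ b := d a * b`:
`(x₁≻x₂)≻((x₃≻x₄)≻x₅) = ((x₁≻x₂)≻(x₃≻x₄))≻x₅ − ((x₁≻x₂)≻x₄)≻(x₃≻x₅)
  + x₄≻((x₁≻x₂)≻(x₃≻x₅))`. -/
theorem perm_der_succ_degree_five_identity {A : Type*} [NonUnitalRing A]
    (perm : ∀ a b c : A, a * b * c = b * a * c)
    (d : A → A) (hadd : ∀ a b : A, d (a + b) = d a + d b)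
    (hleib : ∀ a b : A, d (a * b) = d a * b + a * d b)
    (x₁ x₂ x₃ x₄ x₅ : A) :
    succOp d (succOp d x₁ x₂) (succOp d (succOp d x₃ x₄) x₅) =
      succOp d (succOp d (succOp d x₁ x₂) (succOp d x₃ x₄)) x₅
      - succOp d (succOp d (succOp d x₁ x₂) x₄) (succOp d x₃ x₅)
      + succOp d x₄ (succOp d (succOp d x₁ x₂) (succOp d x₃ x₅)) := by
  simp only [succOp]
  rw [hleib (d (d x₁ * x₂)) (d x₃ * x₄), hleib (d x₃) x₄,
      hleib (d (d x₁ * x₂)) x₄]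
  exact key_aux perm (d (d x₁ * x₂)) (d (d (d x₁ * x₂))) (d x₃) (d (d x₃)) x₄ (d x₄) x₅
end

section
/- The identity (x₁≻x₂)≻((x₃≻x₄)≻x₅) = ((x₁≻x₂)≻(x₃≻x₄))≻x₅ − ((x₁≻x₂)≻x₄)≻(x₃≻x₅) + x₄≻((x₁≻x₂)≻(x₃≻x₅)) is a consequence of the SLC identities; i.e., it holds in every algebra (A, ≻) satisfying: (1) x₁≻(x₂≻x₃) = x₂≻(x₁≻x₃), (2) ⟨x₁, x₂≻x₃, x₄⟩ = ⟨x₁, x₃, x₂≻x₄⟩, and (3) ⟨x₁,x₂,x₃⟩≻x₄ = ⟨x₁,x₃,x₂⟩≻x₄, where ⟨a,b,c⟩ = (a≻b)≻c − a≻(b≻c). -/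
/-- The degree-5 identity holds in every SLC algebra, i.e. in every
(nonassociative) algebra `(A, ≻)` satisfying the three SLC identities. -/
theorem slc_degree_five_identity {A : Type*} [AddCommGroup A]
    (op : A → A → A)
    (hdistl : ∀ a b c : A, op (a + b) c = op a c + op b c)
    (hdistr : ∀ a b c : A, op a (b + c) = op a b + op a c)
    (assoc : A → A → A → A)
    (hassoc : ∀ a b c : A, assoc a b c = op (op a b) c - op a (op b c))
    (id1 : ∀ x₁ x₂ x₃ : A, op x₁ (op x₂ x₃) = op x₂ (op x₁ x₃))
    (id2 : ∀ x₁ x₂ x₃ x₄ : A,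
      assoc x₁ (op x₂ x₃) x₄ = assoc x₁ x₃ (op x₂ x₄))
    (id3 : ∀ x₁ x₂ x₃ x₄ : A,
      op (assoc x₁ x₂ x₃) x₄ = op (assoc x₁ x₃ x₂) x₄)
    (x₁ x₂ x₃ x₄ x₅ : A) :
    op (op x₁ x₂) (op (op x₃ x₄) x₅) =
      op (op (op x₁ x₂) (op x₃ x₄)) x₅
      - op (op (op x₁ x₂) x₄) (op x₃ x₅)
      + op x₄ (op (op x₁ x₂) (op x₃ x₅)) := by
  have h := id2 (op x₁ x₂) x₃ x₄ x₅
  rw [hassoc, hassoc] at h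
  have h1 := id1 (op x₁ x₂) x₄ (op x₃ x₅)
  rw [h1] at h
  rw [sub_add, ← h]
  abel
end

section
/- The dimension of the multilinear component of arity n of the operad DerPerm_≻ equals n·C(2n−3, n−1), where C denotes the binomial coefficient. -/
/-- Basis monomials of the free perm algebra with derivation on generators `X`. -/
abbrev PermMon (X : Type*) := Multiset (X × ℕ) × (X × ℕ)

/-- The multilinear arity-`n` basis monomials of `DerPerm_≻`: every variable
appears exactly once, the total derivation degree is `n - 1` (i.e. the weight
is `-1`) and the rightmost factor is undifferentiated. -/
def derPermSuccBasis (n : ℕ) : Set (PermMon (Fin n)) :=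
  {c | c.1.map Prod.fst + {c.2.1} = (Finset.univ : Finset (Fin n)).val ∧
       (c.1.map Prod.snd).sum + c.2.2 = n - 1 ∧ c.2.2 = 0}

open Finset

lemma multiset_card_finsum {ι α : Type*} (s : Finset ι) (f : ι → Multiset α) :
    Multiset.card (∑ i ∈ s, f i) = ∑ i ∈ s, Multiset.card (f i) := by
  induction s using Finset.cons_induction with
  | empty => simp
  | cons a s ha ih => simp [Finset.sum_cons, Multiset.card_add, ih]

/-- Stars and bars: cardinality of `antidiagonalTuple`. -/
lemma card_antidiagonalTuple (k n : ℕ) :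
    (Finset.Nat.antidiagonalTuple k n).card = (n + k - 1).choose n := by
  classical
  set e : Sym (Fin k) n → (Fin k → ℕ) :=
    fun s => fun i => Multiset.count i (s : Multiset (Fin k)) with he
  have hinj : Function.Injective e := by
    intro s t h
    exact Subtype.ext (Multiset.ext.mpr fun a => congrFun h a)
  have himg : Finset.Nat.antidiagonalTuple k n = Finset.univ.image e := by
    ext f
    simp only [Finset.Nat.mem_antidiagonalTuple, Finset.mem_image, Finset.mem_univ, true_and]
    constructor
    · intro hf
      refine ⟨⟨∑ i, f i • ({i} : Multiset (Fin k)), ?_⟩, ?_⟩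
      · rw [multiset_card_finsum]
        simpa [Multiset.card_nsmul] using hf
      · funext j
        simp [he, Multiset.count_sum', Multiset.count_nsmul, Multiset.count_singleton]
    · rintro ⟨⟨s, hs⟩, rfl⟩
      show ∑ i, Multiset.count i s = n
      rw [← hs]
      exact Multiset.sum_count_eq_card (fun a _ => Finset.mem_univ a)
  rw [himg, Finset.card_image_of_injective _ hinj, Finset.card_univ,
    Sym.card_sym_eq_choose, Fintype.card_fin, Nat.add_comm]

/-- A multiset of pairs with pairwise distinct first components is recovered from
its first components together with the "exponent" function. -/
lemma multiset_eq_map_fst {α : Type*} [DecidableEq α] (M : Multiset (α × ℕ))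
    (h : (M.map Prod.fst).Nodup) :
    M = (M.map Prod.fst).map
      (fun y => (y, ((M.filter (fun p => p.1 = y)).map Prod.snd).sum)) := by
  induction M using Multiset.induction with
  | empty => simp
  | cons a M ih =>
    rw [Multiset.map_cons] at h
    obtain ⟨ha, hM⟩ := Multiset.nodup_cons.mp h
    have hfil0 : Multiset.filter (fun p : α × ℕ => p.1 = a.1) M = 0 := by
      rw [Multiset.filter_eq_nil]
      intro p hp hpy
      exact ha (Multiset.mem_map.mpr ⟨p, hp, hpy⟩)
    rw [Multiset.map_cons, Multiset.map_cons]
    have h1 : Multiset.filter (fun p : α × ℕ => p.1 = a.1) (a ::ₘ M) = {a} := by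
      rw [Multiset.filter_cons_of_pos (p := fun p : α × ℕ => p.1 = a.1) _ rfl, hfil0]
      rfl
    have h2 : ∀ y ∈ M.map Prod.fst,
        (y, ((Multiset.filter (fun p : α × ℕ => p.1 = y) (a ::ₘ M)).map Prod.snd).sum)
          = (y, ((Multiset.filter (fun p : α × ℕ => p.1 = y) M).map Prod.snd).sum) := by
      intro y hy
      have hne : ¬ (a.1 = y) := fun hh => ha (hh ▸ hy)
      rw [Multiset.filter_cons_of_neg (p := fun p : α × ℕ => p.1 = y) _ hne]
    rw [Multiset.map_congr rfl h2, h1]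
    simp only [Multiset.map_singleton, Multiset.sum_singleton]
    exact congrArg (a ::ₘ ·) (ih hM)

variable {m : ℕ}

/-- The parametrization of basis monomials by the last variable and the exponents. -/
def permPhi (m : ℕ) (x : Fin (m + 1)) (g : Fin m → ℕ) : PermMon (Fin (m + 1)) :=
  (((Finset.univ.erase x)).val.map (fun y => (y, Fin.insertNth (α := fun _ => ℕ) x 0 g y)),
    (x, 0))

def permSfin (m : ℕ) : Finset (PermMon (Fin (m + 1))) :=
  Finset.univ.biUnion fun x => (Finset.Nat.antidiagonalTuple m m).image (permPhi m x)

lemma permPhi_injective (x : Fin (m + 1)) : Function.Injective (permPhi m x) := by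
  intro g g' h
  have hM := congrArg Prod.fst h
  simp only [permPhi] at hM
  funext i
  have hy : x.succAbove i ∈ Finset.univ.erase x :=
    Finset.mem_erase.mpr ⟨Fin.succAbove_ne x i, Finset.mem_univ _⟩
  have hmem : (x.succAbove i, g i) ∈
      (Finset.univ.erase x).val.map
        (fun y => (y, Fin.insertNth (α := fun _ => ℕ) x 0 g' y)) := by
    rw [← hM]
    exact Multiset.mem_map.mpr ⟨x.succAbove i, hy, by rw [Fin.insertNth_apply_succAbove]⟩
  obtain ⟨y, _, hy2⟩ := Multiset.mem_map.mp hmem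
  rw [Prod.mk.injEq] at hy2
  obtain ⟨h1, h2⟩ := hy2
  subst h1
  rw [Fin.insertNth_apply_succAbove] at h2
  exact h2.symm

lemma insertNth_sum (x : Fin (m + 1)) (g : Fin m → ℕ) :
    ∑ y : Fin (m + 1), Fin.insertNth (α := fun _ => ℕ) x 0 g y = ∑ i : Fin m, g i := by
  rw [Fin.sum_univ_succAbove _ x, Fin.insertNth_apply_same]
  simp [Fin.insertNth_apply_succAbove]

lemma derPermSuccBasis_eq : derPermSuccBasis (m + 1) = ↑(permSfin m) := by
  classical
  ext c
  obtain ⟨M, x, k⟩ := c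
  simp only [derPermSuccBasis, Set.mem_setOf_eq, permSfin, Finset.coe_biUnion,
    Finset.coe_image, Set.mem_iUnion, Set.mem_image, Finset.mem_coe,
    Finset.Nat.mem_antidiagonalTuple, Finset.mem_univ, Set.iUnion_true]
  constructor
  · rintro ⟨h1, h2, rfl⟩
    have h2' : (M.map Prod.snd).sum = m := by simpa using h2
    have hx : (x ::ₘ M.map Prod.fst).Nodup := by
      rw [← Multiset.singleton_add, add_comm {x} (M.map Prod.fst), h1]
      exact Finset.univ.nodup
    obtain ⟨hxnot, hnd⟩ := Multiset.nodup_cons.mp hx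
    have hs : M.map Prod.fst = (Finset.univ.erase x).val := by
      rw [Finset.erase_val, ← h1, add_comm (M.map Prod.fst) {x}, Multiset.singleton_add,
        Multiset.erase_cons_head]
    set f : Fin (m + 1) → ℕ :=
      fun y => ((M.filter (fun p => p.1 = y)).map Prod.snd).sum with hf
    have hfx : f x = 0 := by
      have h0 : Multiset.filter (fun p : Fin (m + 1) × ℕ => p.1 = x) M = 0 := by
        rw [Multiset.filter_eq_nil]
        intro p hp hpx
        exact hxnot (Multiset.mem_map.mpr ⟨p, hp, hpx⟩)
      simp [hf, h0]
    have hMeq : M = (Finset.univ.erase x).val.map (fun y => (y, f y)) := by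
      rw [← hs]; exact multiset_eq_map_fst M hnd
    set g : Fin m → ℕ := fun i => f (x.succAbove i) with hg
    have hins : Fin.insertNth (α := fun _ => ℕ) x 0 g = f := by
      funext y
      rcases eq_or_ne y x with rfl | hne
      · rw [Fin.insertNth_apply_same, hfx]
      · obtain ⟨i, rfl⟩ := Fin.exists_succAbove_eq hne
        rw [Fin.insertNth_apply_succAbove, hg]
    have hmapsum : ((Finset.univ.erase x).val.map f).sum = (M.map Prod.snd).sum := by
      rw [hMeq, Multiset.map_map]
      rfl
    have hsum : ∑ y : Fin (m + 1), f y = m := by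
      rw [← Finset.sum_erase Finset.univ hfx, Finset.sum_eq_multiset_sum, hmapsum, h2']
    refine ⟨x, g, ?_, ?_⟩
    · calc ∑ i, g i = ∑ y : Fin (m + 1), Fin.insertNth (α := fun _ => ℕ) x 0 g y :=
            (insertNth_sum x g).symm
        _ = m := by rw [hins, hsum]
    · rw [permPhi, hins, ← hMeq]
  · rintro ⟨x', g, hg, hc⟩
    obtain ⟨hM, hx, hk⟩ :
        (Finset.univ.erase x').val.map
            (fun y => (y, Fin.insertNth (α := fun _ => ℕ) x' 0 g y)) = M
          ∧ x' = x ∧ (0 : ℕ) = k := by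
      rw [permPhi, Prod.ext_iff, Prod.ext_iff] at hc
      exact ⟨hc.1, hc.2.1, hc.2.2⟩
    subst hM hx hk
    refine ⟨?_, ?_, rfl⟩
    · rw [Multiset.map_map]
      have hid : (Prod.fst ∘ fun y => (y, Fin.insertNth (α := fun _ => ℕ) x' 0 g y)) = id := rfl
      rw [hid, Multiset.map_id, Finset.erase_val,
        add_comm (Finset.univ.val.erase x') ({x'} : Multiset (Fin (m+1))),
        Multiset.singleton_add, Multiset.cons_erase (Finset.mem_univ_val x')]
    · rw [Multiset.map_map]
      have hfx : Fin.insertNth (α := fun _ => ℕ) x' 0 g x' = 0 :=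
        Fin.insertNth_apply_same (α := fun _ => ℕ) x' 0 g
      have hms : ((Finset.univ.erase x').val.map
          ((Prod.snd ∘ fun y => (y, Fin.insertNth (α := fun _ => ℕ) x' 0 g y)))).sum
          = ∑ y ∈ Finset.univ.erase x', Fin.insertNth (α := fun _ => ℕ) x' 0 g y :=
        (Finset.sum_eq_multiset_sum _ _).symm
      rw [hms, Finset.sum_erase Finset.univ hfx, insertNth_sum, hg]
      simp

lemma permSfin_card : (permSfin m).card = (m + 1) * (2 * (m + 1) - 3).choose m := by
  classical
  rw [permSfin, Finset.card_biUnion]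
  · have hcard : ∀ x : Fin (m + 1),
        ((Finset.Nat.antidiagonalTuple m m).image (permPhi m x)).card
          = (2 * (m + 1) - 3).choose m := by
      intro x
      rw [Finset.card_image_of_injective _ (permPhi_injective x), card_antidiagonalTuple]
      congr 1
      omega
    rw [Finset.sum_congr rfl (fun x _ => hcard x), Finset.sum_const, Finset.card_univ,
      Fintype.card_fin, smul_eq_mul]
  · intro x _ y _ hxy
    simp only [Function.onFun]
    rw [Finset.disjoint_left]
    rintro c hc hc'
    obtain ⟨g, _, rfl⟩ := Finset.mem_image.mp hc
    obtain ⟨g', _, h⟩ := Finset.mem_image.mp hc'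
    have h21 := congrArg (fun c => c.2.1) h
    simp only [permPhi] at h21
    exact hxy h21.symm

/-- `dim DerPerm_≻(n) = n * C(2n-3, n-1)`. -/
theorem dim_derPermSucc (n : ℕ) (hn : 0 < n) :
    Module.finrank ℚ
      (Submodule.span ℚ
        ((fun c => Finsupp.single c (1 : ℚ)) '' derPermSuccBasis n)) =
      n * Nat.choose (2 * n - 3) (n - 1) := by
  obtain ⟨m, rfl⟩ : ∃ m, n = m + 1 := ⟨n - 1, (Nat.succ_pred_eq_of_pos hn).symm⟩
  have hli : LinearIndependent ℚ
      (fun c : ↥(↑(permSfin m) : Set (PermMon (Fin (m + 1)))) =>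
        Finsupp.single (c : PermMon (Fin (m + 1))) (1 : ℚ)) := by
    have hb := (Finsupp.basisSingleOne (R := ℚ)
      (ι := PermMon (Fin (m + 1)))).linearIndependent
    rw [Finsupp.coe_basisSingleOne] at hb
    exact hb.comp _ Subtype.val_injective
  rw [derPermSuccBasis_eq, Set.image_eq_range, finrank_span_eq_card hli]
  simp only [Finset.coe_sort_coe, Fintype.card_coe, Nat.add_sub_cancel]
  exact permSfin_card
end

section
/- In any perm algebra, the commutator [a,b] = ab − ba satisfies the metabelian identity: [[a,b],[c,e]] = 0 for all a,b,c,e. -/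
/-- In any perm algebra, the commutator satisfies the metabelian identity
`[[a,b],[c,e]] = 0`. -/
theorem perm_commutator_metabelian {A : Type*} [NonUnitalRing A]
    (perm : ∀ a b c : A, a * b * c = b * a * c) (a b c e : A) :
    (a * b - b * a) * (c * e - e * c) - (c * e - e * c) * (a * b - b * a) = 0 := by
  have h1 : ∀ x : A, (a * b - b * a) * x = 0 := fun x => by
    rw [sub_mul, perm a b x, sub_self]
  have h2 : ∀ x : A, (c * e - e * c) * x = 0 := fun x => by
    rw [sub_mul, perm c e x, sub_self]
  rw [h1, h2, sub_self]
end

section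
/- Any algebra (A, ≻) that embeds into a perm algebra with derivation via a ≻ b = d(a)b is an SLC algebra: it satisfies x₁≻(x₂≻x₃) = x₂≻(x₁≻x₃), ⟨x₁, x₂≻x₃, x₄⟩ = ⟨x₁, x₃, x₂≻x₄⟩, and ⟨x₁,x₂,x₃⟩≻x₄ = ⟨x₁,x₃,x₂⟩≻x₄. -/
/-- Any algebra `(A, ≻)` that embeds into a perm algebra with derivation via
`a ≻ b ↦ d(a)·b` satisfies the three SLC identities. -/
theorem special_implies_slc {K A P : Type*} [Field K]
    [AddCommGroup A] [Module K A] [NonUnitalRing P] [Module K P]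
    (op : A → A → A)
    (assoc : A → A → A → A)
    (hassoc : ∀ a b c : A, assoc a b c = op (op a b) c - op a (op b c))
    (perm : ∀ a b c : P, a * b * c = b * a * c)
    (d : P → P) (hd_add : ∀ a b : P, d (a + b) = d a + d b)
    (hleib : ∀ a b : P, d (a * b) = d a * b + a * d b)
    (φ : A →ₗ[K] P) (hinj : Function.Injective φ)
    (hembed : ∀ a b : A, φ (op a b) = d (φ a) * φ b) :
    (∀ x₁ x₂ x₃ : A, op x₁ (op x₂ x₃) = op x₂ (op x₁ x₃)) ∧
    (∀ x₁ x₂ x₃ x₄ : A,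
      assoc x₁ (op x₂ x₃) x₄ = assoc x₁ x₃ (op x₂ x₄)) ∧
    (∀ x₁ x₂ x₃ x₄ : A,
      op (assoc x₁ x₂ x₃) x₄ = op (assoc x₁ x₃ x₂) x₄) := by
  -- key fact: in a perm algebra, the two middle factors of a 4-fold product commute
  have key4 : ∀ x y z w : P, x * y * z * w = x * z * y * w := by
    intro x y z w
    rw [perm (x*y) z w, ← mul_assoc z x y, perm z x y]
  have hφassoc : ∀ a b c : A, φ (assoc a b c) = d (d (φ a)) * φ b * φ c := by
    intro a b c
    rw [hassoc, map_sub, hembed, hembed, hembed, hembed, hleib, add_mul,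
      mul_assoc (d (φ a)), add_sub_cancel_right]
  refine ⟨?_, ?_, ?_⟩
  · intro x₁ x₂ x₃
    apply hinj
    rw [hembed, hembed, hembed, hembed, ← mul_assoc, perm, mul_assoc]
  · intro x₁ x₂ x₃ x₄
    apply hinj
    rw [hφassoc, hφassoc, hembed, hembed, ← mul_assoc, ← mul_assoc, key4]
  · intro x₁ x₂ x₃ x₄
    apply hinj
    rw [hembed, hembed, hφassoc, hφassoc]
    have e : ∀ y z : P, d (d (d (φ x₁)) * y * z) * (φ x₄) =
        d (d (d (φ x₁))) * y * z * (φ x₄)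
        + d (d (φ x₁)) * (d y) * z * (φ x₄)
        + d (d (φ x₁)) * y * (d z) * (φ x₄) := by
      intro y z
      rw [hleib, hleib, add_mul, add_mul, mul_assoc (d (d (φ x₁))) y (d z)]
      rw [← mul_assoc (d (d (φ x₁))) y (d z), add_mul]
    rw [e, e, key4 (d (d (d (φ x₁)))) (φ x₂) (φ x₃),
      key4 (d (d (φ x₁))) (d (φ x₂)) (φ x₃),
      key4 (d (d (φ x₁))) (φ x₂) (d (φ x₃))]
    abel
end

section
/- In any perm algebra with derivation d and a ≻ b := d(a)b, the associator identity ⟨x₁, x₂, x₃ ≻ x₄⟩ = x₃ ≻ ⟨x₁, x₂, x₄⟩ holds, where ⟨a,b,c⟩ = (a≻b)≻c − a≻(b≻c). -/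
/-- In any perm algebra with derivation `d` and `a ≻ b := d a * b`:
`⟨x₁, x₂, x₃ ≻ x₄⟩ = x₃ ≻ ⟨x₁, x₂, x₄⟩`. -/
theorem perm_der_succ_associator_right {A : Type*} [NonUnitalRing A]
    (perm : ∀ a b c : A, a * b * c = b * a * c)
    (d : A → A) (hadd : ∀ a b : A, d (a + b) = d a + d b)
    (hleib : ∀ a b : A, d (a * b) = d a * b + a * d b)
    (x₁ x₂ x₃ x₄ : A) :
    succAssoc d x₁ x₂ (succOp d x₃ x₄) = succOp d x₃ (succAssoc d x₁ x₂ x₄) := by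
  have key : ∀ c : A, succAssoc d x₁ x₂ c = d (d x₁) * x₂ * c := by
    intro c
    simp only [succAssoc, succOp, hleib]
    noncomm_ring
  simp only [succOp, key]
  calc d (d x₁) * x₂ * (d x₃ * x₄) = d (d x₁) * x₂ * d x₃ * x₄ := by rw [← mul_assoc]
    _ = d x₃ * (d (d x₁) * x₂) * x₄ := by rw [perm]
    _ = d x₃ * (d (d x₁) * x₂ * x₄) := by rw [mul_assoc, mul_assoc]
end
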